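/- Let m ≥ 1 and let e_1,…,e_m be nonnegative integers with e_1 + ⋯ + e_m = m. Then the monomial x_1^{e_1}⋯x_m^{e_m} equals 0 in Q_m if and only if there exist integers d and D with 1 ≤ d < D ≤ m such that e_1 + ⋯ + e_d = D, e_i = 0 for all i with d < i ≤ D, and the element x_{D+1}^{e_{D+1}}⋯x_m^{e_m} equals x_{D+1}x_{D+2}⋯x_m in Q_m. -/

import Mathlib

open MvPolynomial Finset

noncomputable section

open Fin.NatCast in
/-- The defining ideal of `Q_m`: generated by `x_1^2` and `x_i^2 - x_{i-1} x_i` for `2 ≤ i ≤ m`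
(variables are 1-based; `X ((i-1 : ℕ) : Fin m)` is `x_i`). -/
def Qrel (m : ℕ) [NeZero m] : Ideal (MvPolynomial (Fin m) (ZMod 2)) :=
  Ideal.span ((fun i : ℕ =>
      X ((i - 1 : ℕ) : Fin m) ^ 2 -
        (if i = 1 then 0 else X ((i - 2 : ℕ) : Fin m) * X ((i - 1 : ℕ) : Fin m))) ''
    Set.Icc 1 m)

/-- The ring `Q_m`. -/
abbrev Qring (m : ℕ) [NeZero m] : Type :=
  MvPolynomial (Fin m) (ZMod 2) ⧸ Qrel m

open Fin.NatCast in
/-- The image of `x_i` (1-based, for `1 ≤ i ≤ m`) in `Q_m`. -/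
def xQ (m : ℕ) [NeZero m] (i : ℕ) : Qring m :=
  Ideal.Quotient.mk (Qrel m) (X ((i - 1 : ℕ) : Fin m))

open Fin.NatCast

variable (m : ℕ) [NeZero m]

lemma xQ_sq_one : xQ m 1 ^ 2 = 0 := by
  have h1 : (1 : ℕ) ∈ Set.Icc 1 m := Set.mem_Icc.2 ⟨le_refl 1, Nat.one_le_iff_ne_zero.2 (NeZero.ne m)⟩
  have h : (X ((1 - 1 : ℕ) : Fin m) ^ 2 : MvPolynomial (Fin m) (ZMod 2)) ∈ Qrel m := by
    have := Ideal.subset_span (Set.mem_image_of_mem (fun i : ℕ =>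
      (X ((i - 1 : ℕ) : Fin m) ^ 2 -
        (if i = 1 then 0 else X ((i - 2 : ℕ) : Fin m) * X ((i - 1 : ℕ) : Fin m)) :
        MvPolynomial (Fin m) (ZMod 2))) h1)
    simpa [Qrel] using this
  show Ideal.Quotient.mk (Qrel m) (X ((1 - 1 : ℕ) : Fin m)) ^ 2 = 0
  rw [← map_pow, Ideal.Quotient.eq_zero_iff_mem]
  exact h

lemma xQ_sq (i : ℕ) (h2 : 2 ≤ i) (him : i ≤ m) :
    xQ m i ^ 2 = xQ m (i - 1) * xQ m i := by
  have hi : i ∈ Set.Icc 1 m := Set.mem_Icc.2 ⟨by omega, him⟩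
  have hmem : (X ((i - 1 : ℕ) : Fin m) ^ 2 -
      X ((i - 2 : ℕ) : Fin m) * X ((i - 1 : ℕ) : Fin m) : MvPolynomial (Fin m) (ZMod 2)) ∈ Qrel m := by
    have := Ideal.subset_span (Set.mem_image_of_mem (fun i : ℕ =>
      (X ((i - 1 : ℕ) : Fin m) ^ 2 -
        (if i = 1 then 0 else X ((i - 2 : ℕ) : Fin m) * X ((i - 1 : ℕ) : Fin m)) :
        MvPolynomial (Fin m) (ZMod 2))) hi)
    simp only [if_neg (by omega : i ≠ 1)] at this
    exact this
  have hz := Ideal.Quotient.eq_zero_iff_mem.2 hmem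
  rw [map_sub] at hz
  have h3 : (i - 1 : ℕ) - 1 = i - 2 := by omega
  show Ideal.Quotient.mk (Qrel m) (X ((i - 1 : ℕ) : Fin m)) ^ 2 =
    Ideal.Quotient.mk (Qrel m) (X ((i - 1 - 1 : ℕ) : Fin m)) * Ideal.Quotient.mk (Qrel m) (X ((i - 1 : ℕ) : Fin m))
  rw [← map_pow, ← map_mul, h3]
  linear_combination hz

lemma prodIcc_cons {M : Type*} [CommMonoid M] {s b : ℕ} (h : s ≤ b) (f : ℕ → M) :
    ∏ t ∈ Icc s b, f t = f s * ∏ t ∈ Icc (s+1) b, f t := by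
  rw [Finset.Icc_eq_cons_Ioc h, Finset.prod_cons, ← Finset.Icc_add_one_left_eq_Ioc]

lemma sumIcc_cons {M : Type*} [AddCommMonoid M] {s b : ℕ} (h : s ≤ b) (f : ℕ → M) :
    ∑ t ∈ Icc s b, f t = f s + ∑ t ∈ Icc (s+1) b, f t := by
  rw [Finset.Icc_eq_cons_Ioc h, Finset.sum_cons, ← Finset.Icc_add_one_left_eq_Ioc]


lemma xQ_shift (b : ℕ) (hbm : b ≤ m) :
    ∀ k i s, 1 ≤ i → i ≤ b → s + k = i + 1 → 1 ≤ s → s ≤ b + 1 →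
    xQ m i * ∏ t ∈ Icc s b, xQ m t =
      if 2 ≤ s then ∏ t ∈ Icc (s-1) b, xQ m t else 0 := by
  intro k
  induction k with
  | zero =>
    intro i s hi1 hib hs hs1 hsb
    have hsi : s = i + 1 := by omega
    subst hsi
    rw [if_pos (by omega)]
    have : i + 1 - 1 = i := by omega
    rw [this, prodIcc_cons (by omega : i ≤ b)]
  | succ k ih =>
    intro i s hi1 hib hs hs1 hsb
    have hsle : s ≤ i := by omega
    have hsb' : s ≤ b := le_trans hsle hib
    rw [prodIcc_cons hsb', mul_left_comm,
      ih i (s+1) hi1 hib (by omega) (by omega) (by omega), if_pos (by omega)]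
    have h1 : s + 1 - 1 = s := by omega
    rw [h1, prodIcc_cons hsb', ← mul_assoc, ← sq]
    by_cases h2s : 2 ≤ s
    · rw [if_pos h2s, xQ_sq m s h2s (le_trans hsb' hbm), mul_assoc, ← prodIcc_cons hsb',
        prodIcc_cons (by omega : s - 1 ≤ b) (xQ m), show s - 1 + 1 = s by omega]
    · have : s = 1 := by omega
      subst this
      rw [xQ_sq_one, zero_mul, if_neg h2s]

lemma xQ_pow_mul (b : ℕ) (hbm : b ≤ m) (i : ℕ) (hi : 1 ≤ i) (hib : i ≤ b) :
    ∀ k s, 1 ≤ s → s ≤ i + 1 → s ≤ b + 1 →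
    xQ m i ^ k * ∏ t ∈ Icc s b, xQ m t =
      if k < s then ∏ t ∈ Icc (s-k) b, xQ m t else 0 := by
  intro k
  induction k with
  | zero =>
    intro s h1 h2 h3
    simp [if_pos h1, Nat.lt_of_lt_of_le Nat.zero_lt_one h1]
  | succ k ih =>
    intro s h1 h2 h3
    rw [pow_succ, mul_comm (xQ m i ^ k) (xQ m i), mul_assoc, ih s h1 h2 h3]
    by_cases hks : k < s
    · rw [if_pos hks]
      rw [xQ_shift m b hbm (i + 1 - (s - k)) i (s-k) hi hib (by omega) (by omega) (by omega)]
      by_cases h2s : 2 ≤ s - k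
      · rw [if_pos h2s, if_pos (by omega), show s - k - 1 = s - (k+1) by omega]
      · rw [if_neg h2s, if_neg (by omega)]
    · rw [if_neg hks, mul_zero, if_neg (by omega)]

lemma xQ_master (e : ℕ → ℕ) :
    ∀ n a c, a + n ≤ m →
    (∀ j, a ≤ j → j ≤ a + n → ∑ i ∈ Icc (a+1) j, e i ≤ j - a + c) →
    (∑ i ∈ Icc (a+1) (a+n), e i = n + c) →
    ∏ i ∈ Icc (a+1) (a+n), xQ m i ^ e i =
      if c ≤ a then ∏ i ∈ Icc (a+1-c) (a+n), xQ m i else 0 := by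
  intro n
  induction n with
  | zero =>
    intro a c hm hpre htot
    simp only [Nat.add_zero] at *
    have hc : c = 0 := by
      have : Icc (a+1) a = ∅ := by rw [Finset.Icc_eq_empty]; omega
      rw [this] at htot; simpa using htot.symm
    subst hc
    rw [if_pos (Nat.zero_le a)]
    have h1 : Icc (a+1) a = ∅ := by rw [Finset.Icc_eq_empty]; omega
    have h2 : a + 1 - 0 = a + 1 := by omega
    rw [h2, h1]
    simp
  | succ n ih =>
    intro a c hm hpre htot
    set b := a + (n+1) with hb
    have hk : e (a+1) ≤ c + 1 := by
      have h := hpre (a+1) (by omega) (by omega)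
      rw [Finset.Icc_self, Finset.sum_singleton] at h
      omega
    set k := e (a+1) with hkdef
    set c' := c + 1 - k with hc'
    -- sums split
    have hsplit : ∀ (f : ℕ → Qring m), ∏ i ∈ Icc (a+1) b, f i = f (a+1) * ∏ i ∈ Icc (a+2) b, f i := by
      intro f; exact prodIcc_cons (by omega) f
    have hsumsplit : ∀ j, a + 1 ≤ j →
        ∑ i ∈ Icc (a+1) j, e i = k + ∑ i ∈ Icc (a+2) j, e i := by
      intro j hj1
      rw [sumIcc_cons (by omega : a + 1 ≤ j) e]
    have hrest := ih (a+1) c' (by omega : a + 1 + n ≤ m) ?pre ?tot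
    case pre =>
      intro j hj1 hj2
      rw [show a+1+1 = a+2 by omega]
      have h1 := hpre j (by omega) (by omega : j ≤ a + (n+1))
      have h2 := hsumsplit j hj1
      omega
    case tot =>
      rw [show a+1+1 = a+2 by omega]
      have h2 := hsumsplit (a+1+n) (by omega)
      rw [show a+1+n = b by omega] at h2 ⊢
      omega
    rw [show a+1+1 = a+2 by omega, show a+1+n = b by omega] at hrest
    rw [hsplit (fun i => xQ m i ^ e i)]
    rw [hrest]
    by_cases hca : c' ≤ a + 1
    · rw [if_pos hca]
      rw [xQ_pow_mul m b (by omega) (a+1) (by omega) (by omega) k (a+2-c')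
        (by omega) (by omega) (by omega)]
      by_cases hc : c ≤ a
      · rw [if_pos (by omega : k < a + 2 - c'), if_pos hc,
          show a+2-c'-k = a+1-c by omega]
      · rw [if_neg (by omega : ¬ k < a + 2 - c'), if_neg hc]
    · rw [if_neg hca, mul_zero, if_neg (by omega : ¬ c ≤ a)]

/-- admissible exponent vectors -/
def Sgood (f : Fin m →₀ ℕ) : Prop := ∀ j : Fin m, ∑ i ∈ Finset.Iic j, f i ≤ j.val + 1

instance : DecidablePred (Sgood m) := fun _ => Fintype.decidableForallFintype

/-- the detecting functional -/
def phi : MvPolynomial (Fin m) (ZMod 2) →+ ZMod 2 :=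
  (Finsupp.liftAddHom (fun f => if Sgood m f then AddMonoidHom.id (ZMod 2) else 0)).comp
    AddMonoidAlgebra.coeffAddEquiv.toAddMonoidHom

lemma phi_monomial (f : Fin m →₀ ℕ) (c : ZMod 2) :
    phi m (monomial f c) = if Sgood m f then c else 0 := by
  rw [← single_eq_monomial]
  show (Finsupp.liftAddHom (fun f => if Sgood m f then AddMonoidHom.id (ZMod 2) else 0) :
    ((Fin m →₀ ℕ) →₀ ZMod 2) →+ ZMod 2) (Finsupp.single f c) = _
  rw [Finsupp.liftAddHom_apply_single]
  split <;> rfl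

lemma prefix_single (v : Fin m →₀ ℕ) (x j : Fin m) :
    ∑ i ∈ Finset.Iic j, ((v + Finsupp.single x 1 : Fin m →₀ ℕ)) i =
      (∑ i ∈ Finset.Iic j, v i) + (if x ≤ j then 1 else 0) := by
  simp only [Finsupp.add_apply, Finset.sum_add_distrib]
  congr 1
  simp only [Finsupp.single_apply]
  rw [Finset.sum_ite_eq]
  simp [Finset.mem_Iic]

lemma Iic_insert (a b : Fin m) (hab : a.val = b.val + 1) :
    Finset.Iic a = insert a (Finset.Iic b) := by
  ext i
  simp only [Finset.mem_Iic, Finset.mem_insert, Fin.le_def]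
  constructor
  · intro h
    rcases Nat.lt_or_ge i.val a.val with h' | h'
    · right; omega
    · left; exact Fin.ext (by omega)
  · rintro (rfl | h) <;> omega

lemma Sgood_step (v : Fin m →₀ ℕ) (a b : Fin m) (hab : a.val = b.val + 1) (hv : 1 ≤ v a) :
    Sgood m (v + Finsupp.single a 1) ↔ Sgood m (v + Finsupp.single b 1) := by
  have hba : b ≤ a := by rw [Fin.le_def]; omega
  constructor
  · intro h j
    rw [prefix_single]
    by_cases hbj : b ≤ j
    · by_cases haj : a ≤ j
      · have := h j; rw [prefix_single, if_pos haj] at this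
        rw [if_pos hbj]; exact this
      · -- b ≤ j < a, so j = b
        have hjb : j = b := by
          apply Fin.ext
          rw [Fin.le_def] at hbj; rw [Fin.le_def] at haj; omega
        rw [hjb]
        have hA := h a; rw [prefix_single, if_pos (le_refl a)] at hA
        have hsum : ∑ i ∈ Finset.Iic a, v i = v a + ∑ i ∈ Finset.Iic b, v i := by
          rw [Iic_insert m a b hab, Finset.sum_insert (by simp only [Finset.mem_Iic]; intro hc; rw [Fin.le_def] at hc; omega)]
        rw [if_pos (le_refl b)]
        omega
    · have haj : ¬ a ≤ j := fun h' => hbj (le_trans hba h')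
      have := h j; rw [prefix_single, if_neg haj] at this
      rw [if_neg hbj]; omega
  · intro h j
    have := h j; rw [prefix_single] at this
    rw [prefix_single]
    by_cases haj : a ≤ j
    · rw [if_pos haj]; rw [if_pos (le_trans hba haj)] at this; omega
    · rw [if_neg haj]; omega

lemma val_cast_of_lt' {k : ℕ} (h : k < m) : ((k : Fin m)).val = k := by
  simp [Fin.val_natCast, Nat.mod_eq_of_lt h]

lemma phi_mul_gen (i : ℕ) (hi1 : 1 ≤ i) (him : i ≤ m) (p : MvPolynomial (Fin m) (ZMod 2)) :
    phi m (p * (X ((i - 1 : ℕ) : Fin m) ^ 2 -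
      (if i = 1 then 0 else X ((i - 2 : ℕ) : Fin m) * X ((i - 1 : ℕ) : Fin m)))) = 0 := by
  induction p using MvPolynomial.induction_on' with
  | add p q hp hq => rw [add_mul, map_add, hp, hq, add_zero]
  | monomial u c =>
    set a : Fin m := ((i - 1 : ℕ) : Fin m) with ha
    have hav : a.val = i - 1 := val_cast_of_lt' m (by omega)
    by_cases h1 : i = 1
    · subst h1
      rw [if_pos rfl, sub_zero, X_pow_eq_monomial, monomial_mul, mul_one, phi_monomial]
      rw [if_neg]
      intro hS
      have := hS a
      have h2 : (u + Finsupp.single a 2 : Fin m →₀ ℕ) a ≤ ∑ i ∈ Finset.Iic a, (u + Finsupp.single a 2 : Fin m →₀ ℕ) i :=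
        Finset.single_le_sum (fun i _ => Nat.zero_le _) (Finset.mem_Iic.2 (le_refl a))
      have h3 : (u + Finsupp.single a 2 : Fin m →₀ ℕ) a = u a + 2 := by
        simp [Finsupp.add_apply, Finsupp.single_apply]
      rw [h3] at h2
      rw [hav] at this
      omega
    · set b : Fin m := ((i - 2 : ℕ) : Fin m) with hb
      have hbv : b.val = i - 2 := val_cast_of_lt' m (by omega)
      have hab : a.val = b.val + 1 := by omega
      rw [if_neg h1, mul_sub, X_pow_eq_monomial, monomial_mul, mul_one]
      rw [show (X b * X a : MvPolynomial (Fin m) (ZMod 2)) = monomial (Finsupp.single b 1 + Finsupp.single a 1) 1 by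
        rw [X, X, monomial_mul, mul_one]]
      rw [monomial_mul, mul_one, map_sub, phi_monomial, phi_monomial]
      have hkey := Sgood_step m (u + Finsupp.single a 1) a b hab (by simp [Finsupp.add_apply, Finsupp.single_apply])
      have e1 : u + Finsupp.single a 2 = u + Finsupp.single a 1 + Finsupp.single a 1 := by
        rw [add_assoc, ← Finsupp.single_add]
      have e2 : u + (Finsupp.single b 1 + Finsupp.single a 1) = u + Finsupp.single a 1 + Finsupp.single b 1 := by
        abel
      rw [e1, e2]
      by_cases hS : Sgood m (u + Finsupp.single a 1 + Finsupp.single a 1)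
      · rw [if_pos hS, if_pos (hkey.1 hS), sub_self]
      · rw [if_neg hS, if_neg (fun h => hS (hkey.2 h)), sub_self]

lemma phi_Qrel (x : MvPolynomial (Fin m) (ZMod 2)) (hx : x ∈ Qrel m) : phi m x = 0 := by
  have main : ∀ r : MvPolynomial (Fin m) (ZMod 2), phi m (r * x) = 0 := by
    refine Submodule.span_induction ?_ ?_ ?_ ?_ hx
    · rintro g ⟨i, hi, rfl⟩
      intro r
      exact phi_mul_gen m i hi.1 hi.2 r
    · intro r; rw [mul_zero, map_zero]
    · intro y z _ _ hy hz r
      rw [mul_add, map_add, hy, hz, add_zero]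
    · intro c y _ hy r
      rw [smul_eq_mul, ← mul_assoc, hy]
  simpa using main 1

lemma prod_X_reindex :
    (∏ i ∈ Icc 1 m, (X (((i - 1 : ℕ) : Fin m)) : MvPolynomial (Fin m) (ZMod 2))) =
      ∏ j : Fin m, (X j : MvPolynomial (Fin m) (ZMod 2)) := by
  refine Finset.prod_nbij' (fun i : ℕ => ((i - 1 : ℕ) : Fin m)) (fun j : Fin m => j.val + 1)
    ?_ ?_ ?_ ?_ ?_
  · intro i hi; exact Finset.mem_univ _
  · intro j _
    simp only [Finset.mem_Icc]
    have := j.isLt; omega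
  · intro i hi
    simp only [Finset.mem_Icc] at hi
    show (((i - 1 : ℕ) : Fin m)).val + 1 = i
    have := val_cast_of_lt' m (show i - 1 < m by omega)
    omega
  · intro j _
    show (((j.val + 1 - 1 : ℕ)) : Fin m) = j
    have h1 : (j.val + 1 - 1 : ℕ) = j.val := by omega
    rw [h1, Fin.cast_val_eq_self]
  · intro i hi; rfl

lemma allones_apply (i : Fin m) : (∑ j : Fin m, Finsupp.single j 1 : Fin m →₀ ℕ) i = 1 := by
  rw [Finsupp.finset_sum_apply]
  simp [Finsupp.single_apply]

lemma Sgood_allones : Sgood m (∑ j : Fin m, Finsupp.single j 1) := by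
  intro j
  rw [Finset.sum_congr rfl (fun i _ => allones_apply m i)]
  simp [Fin.card_Iic]

lemma prod_xQ_ne_zero : (∏ i ∈ Icc 1 m, xQ m i) ≠ 0 := by
  intro h0
  have hmem : (∏ i ∈ Icc 1 m, (X (((i - 1 : ℕ) : Fin m)) : MvPolynomial (Fin m) (ZMod 2))) ∈ Qrel m := by
    rw [← Ideal.Quotient.eq_zero_iff_mem, map_prod]
    exact h0
  have hphi := phi_Qrel m _ hmem
  rw [prod_X_reindex] at hphi
  have hX : ∀ j : Fin m, (X j : MvPolynomial (Fin m) (ZMod 2)) = monomial (Finsupp.single j 1) 1 := by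
    intro j; rw [X]
  rw [Finset.prod_congr rfl (fun j _ => hX j), ← monomial_sum_one, phi_monomial,
    if_pos (Sgood_allones m)] at hphi
  exact one_ne_zero hphi


lemma sum_Icc_split (e : ℕ → ℕ) (a b c : ℕ) (h1 : a ≤ b) (h2 : b ≤ c) :
    ∑ i ∈ Icc (a+1) c, e i = (∑ i ∈ Icc (a+1) b, e i) + ∑ i ∈ Icc (b+1) c, e i := by
  rw [Finset.Icc_add_one_left_eq_Ioc, Finset.Icc_add_one_left_eq_Ioc, Finset.Icc_add_one_left_eq_Ioc,
    ← Finset.sum_Ioc_consecutive e h1 h2]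

lemma prod_Icc_split {M : Type*} [CommMonoid M] (f : ℕ → M) (a b c : ℕ) (h1 : a ≤ b) (h2 : b ≤ c) :
    ∏ i ∈ Icc (a+1) c, f i = (∏ i ∈ Icc (a+1) b, f i) * ∏ i ∈ Icc (b+1) c, f i := by
  rw [Finset.Icc_add_one_left_eq_Ioc, Finset.Icc_add_one_left_eq_Ioc, Finset.Icc_add_one_left_eq_Ioc,
    ← Finset.prod_Ioc_consecutive f h1 h2]


/-- Corollary 2.7: a degree-`m` monomial is `0` in `Q_m` iff it decomposes as `A ⋅ B` where
`A = x_1^{e_1} ⋯ x_d^{e_d}` has degree `D > d`, there is a gap (`e_i = 0` for `d < i ≤ D`),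
and `B = x_{D+1}^{e_{D+1}} ⋯ x_m^{e_m}` equals `x_{D+1} ⋯ x_m` in `Q_m`. -/
theorem statement2 (m : ℕ) [NeZero m] (hm : 1 ≤ m) (e : ℕ → ℕ)
    (he : ∑ i ∈ Finset.Icc 1 m, e i = m) :
    (∏ i ∈ Finset.Icc 1 m, xQ m i ^ e i) = 0 ↔
      ∃ d D, 1 ≤ d ∧ d < D ∧ D ≤ m ∧ (∑ i ∈ Finset.Icc 1 d, e i) = D ∧
        (∀ i, d < i → i ≤ D → e i = 0) ∧
        (∏ i ∈ Finset.Icc (D + 1) m, xQ m i ^ e i) = ∏ i ∈ Finset.Icc (D + 1) m, xQ m i := by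
  have hPs : ∀ a j : ℕ, a ≤ j →
      (∑ i ∈ Icc 1 j, e i) = (∑ i ∈ Icc 1 a, e i) + ∑ i ∈ Icc (a+1) j, e i := by
    intro a j haj
    have := sum_Icc_split e 0 a j (Nat.zero_le a) haj
    rwa [Nat.zero_add] at this
  constructor
  · intro h0
    -- step 1: there is a prefix violation
    have hex : ∃ j, 1 ≤ j ∧ j ≤ m ∧ j < ∑ i ∈ Icc 1 j, e i := by
      by_contra hno
      push_neg at hno
      have hM := xQ_master m e m 0 0 (by omega) ?_ ?_
      · simp only [Nat.zero_add, Nat.add_zero, Nat.sub_zero] at hM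
        rw [if_pos (le_refl 0)] at hM
        rw [hM] at h0
        exact prod_xQ_ne_zero m h0
      · intro j hj0 hjm
        simp only [Nat.zero_add, Nat.sub_zero, Nat.add_zero] at *
        rcases Nat.eq_zero_or_pos j with rfl | hj1
        · simp
        · have := hno j hj1 (by omega)
          omega
      · rw [Nat.zero_add, Nat.zero_add, he, Nat.add_zero]
    -- step 2: choose the largest violation point j0
    set T := (Icc 1 m).filter (fun j => j < ∑ i ∈ Icc 1 j, e i) with hT
    have hTne : T.Nonempty := by
      obtain ⟨j, hj1, hjm, hjv⟩ := hex
      exact ⟨j, by simp [hT, Finset.mem_filter, Finset.mem_Icc]; omega⟩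
    set j0 := T.max' hTne with hj0def
    have hj0T : j0 ∈ T := T.max'_mem hTne
    have hj0max : ∀ j ∈ T, j ≤ j0 := fun j hj => T.le_max' j hj
    simp only [hT, Finset.mem_filter, Finset.mem_Icc] at hj0T
    obtain ⟨⟨hj01, hj0m⟩, hj0v⟩ := hj0T
    have hnotT : ∀ j, j0 < j → j ≤ m → ∑ i ∈ Icc 1 j, e i ≤ j := by
      intro j hjgt hjm
      by_contra hc
      push_neg at hc
      have : j ∈ T := by simp [hT, Finset.mem_filter, Finset.mem_Icc]; omega
      have := hj0max j this
      omega
    have hj0lt : j0 < m := by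
      rcases Nat.lt_or_ge j0 m with h | h
      · exact h
      · have : j0 = m := by omega
        rw [this, he] at hj0v
        omega
    set D := j0 + 1 with hD
    have hDm : D ≤ m := by omega
    have hPD' : ∑ i ∈ Icc 1 D, e i = (∑ i ∈ Icc 1 j0, e i) + e D := by
      rw [Finset.sum_Icc_succ_top (by omega : 1 ≤ j0 + 1)]
    have hPDle : ∑ i ∈ Icc 1 D, e i ≤ D := hnotT D (by omega) hDm
    have heD : e D = 0 := by omega
    have hPj0 : ∑ i ∈ Icc 1 j0, e i = j0 + 1 := by omega
    -- step 3: choose d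
    set T2 := (Icc 1 j0).filter (fun i => e i ≠ 0) with hT2
    have hT2ne : T2.Nonempty := by
      rw [Finset.filter_nonempty_iff]
      by_contra hc
      push_neg at hc
      have : ∑ i ∈ Icc 1 j0, e i = 0 := Finset.sum_eq_zero hc
      omega
    set d := T2.max' hT2ne with hddef
    have hdT2 : d ∈ T2 := T2.max'_mem hT2ne
    have hdmax : ∀ i ∈ T2, i ≤ d := fun i hi => T2.le_max' i hi
    simp only [hT2, Finset.mem_filter, Finset.mem_Icc] at hdT2
    obtain ⟨⟨hd1, hdj0⟩, hde⟩ := hdT2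
    have hgap : ∀ i, d < i → i ≤ D → e i = 0 := by
      intro i hdi hiD
      rcases Nat.lt_or_ge i D with h | h
      · by_contra hc
        have : i ∈ T2 := by simp [hT2, Finset.mem_filter, Finset.mem_Icc]; omega
        have := hdmax i this
        omega
      · have : i = D := by omega
        rw [this]; exact heD
    have hsum_d : ∑ i ∈ Icc 1 d, e i = D := by
      have hsplit := hPs d j0 hdj0
      have hz : ∑ i ∈ Icc (d+1) j0, e i = 0 :=
        Finset.sum_eq_zero (by
          intro x hx
          rw [Finset.mem_Icc] at hx
          exact hgap x (by omega) (by omega))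
      omega
    -- step 4: the tail is the squarefree product
    have htail := xQ_master m e (m - D) D 0 (by omega) ?_ ?_
    · rw [show D + (m - D) = m by omega, Nat.add_zero, Nat.sub_zero] at htail
      rw [if_pos (Nat.zero_le D)] at htail
      exact ⟨d, D, hd1, by omega, hDm, hsum_d, hgap, htail⟩
    · intro j hDj hjm
      rw [show D + (m - D) = m by omega] at hjm
      have h1 := hnotT j (by omega) hjm
      have h2 := hPs D j hDj
      have h3 : ∑ i ∈ Icc 1 D, e i = D := by omega
      omega
    · rw [show D + (m - D) = m by omega]
      have h2 := hPs D m hDm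
      have h3 : ∑ i ∈ Icc 1 D, e i = D := by omega
      omega
  · rintro ⟨d, D, hd1, hdD, hDm, hsum, hgap, _⟩
    -- the head is overloaded hence zero
    have hdm : d ≤ m := by omega
    obtain ⟨j0, hj0mem, hj0eq⟩ := Finset.exists_mem_eq_sup (Icc 1 d)
      ⟨d, Finset.mem_Icc.2 ⟨hd1, le_refl d⟩⟩ (fun j => (∑ i ∈ Icc 1 j, e i) - j)
    rw [Finset.mem_Icc] at hj0mem
    have hcge : ∀ j, 1 ≤ j → j ≤ d →
        (∑ i ∈ Icc 1 j, e i) - j ≤ (∑ i ∈ Icc 1 j0, e i) - j0 := by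
      intro j h1 h2
      have := Finset.le_sup (f := fun j => (∑ i ∈ Icc 1 j, e i) - j)
        (Finset.mem_Icc.2 ⟨h1, h2⟩)
      rw [hj0eq] at this
      exact this
    have hc1 : 1 ≤ (∑ i ∈ Icc 1 j0, e i) - j0 := by
      have := hcge d hd1 (le_refl d)
      omega
    have hM := xQ_master m e j0 0 ((∑ i ∈ Icc 1 j0, e i) - j0) (by omega) ?_ ?_
    · rw [Nat.zero_add, Nat.zero_add, if_neg (by omega : ¬ (∑ i ∈ Icc 1 j0, e i) - j0 ≤ 0)] at hM
      have hsplit := prod_Icc_split (fun i => xQ m i ^ e i) 0 j0 m (Nat.zero_le j0) (by omega)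
      rw [Nat.zero_add] at hsplit
      rw [hsplit, hM, zero_mul]
    · intro j hj0 hjj0
      simp only [Nat.zero_add, Nat.sub_zero, Nat.add_zero] at *
      rcases Nat.eq_zero_or_pos j with rfl | hj1
      · simp
      · have := hcge j hj1 (by omega)
        omega
    · rw [Nat.zero_add, Nat.zero_add]
      omega
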